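/- Let T be an element with faces, q ∈ [P_{k-1}(T)]^d, and v = {v_0, v_b} a weak function with v_0 a polynomial of degree k. If the discrete weak gradient of v vanishes (∇_{w,k-1,T} v = 0) and Q_b v_0 = v_b on ∂T, then ∇v_0 = 0 on T, i.e., v_0 is constant on T. -/

import Mathlib

open MeasureTheory
open scoped RealInnerProductSpace

abbrev Euc (d : ℕ) := EuclideanSpace ℝ (Fin d)

def PolyScal (d r : ℕ) : Set (Euc d → ℝ) :=
  {f | ∃ p : MvPolynomial (Fin d) ℝ, p.totalDegree ≤ r ∧
    ∀ x, f x = MvPolynomial.eval (fun i => x i) p}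

def PolyVec (d r : ℕ) : Set (Euc d → Euc d) :=
  {q | ∀ i, (fun x => q x i) ∈ PolyScal d r}

open MvPolynomial in
noncomputable def gradCLM {d : ℕ} (p : MvPolynomial (Fin d) ℝ) (x : Euc d) :
    Euc d →L[ℝ] ℝ :=
  ∑ i, MvPolynomial.eval (fun j => x j) (pderiv i p) • (EuclideanSpace.proj i : Euc d →L[ℝ] ℝ)

open MvPolynomial in
lemma gradCLM_apply {d : ℕ} (p : MvPolynomial (Fin d) ℝ) (x v : Euc d) :
    gradCLM p x v = ∑ i, MvPolynomial.eval (fun j => x j) (pderiv i p) * v i := by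
  simp [gradCLM, ContinuousLinearMap.sum_apply]

open MvPolynomial in
lemma hasFDerivAt_mv_eval {d : ℕ} (p : MvPolynomial (Fin d) ℝ) (x : Euc d) :
    HasFDerivAt (fun y : Euc d => MvPolynomial.eval (fun i => y i) p) (gradCLM p x) x := by
  induction p using MvPolynomial.induction_on with
  | C a =>
      have : gradCLM (d := d) (C a) x = 0 := by
        ext v; simp [gradCLM_apply, pderiv_C]
      rw [this]
      simpa using hasFDerivAt_const a x
  | add p q hp hq =>
      have h := hp.add hq
      have he : gradCLM (p + q) x = gradCLM p x + gradCLM q x := by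
        ext v
        simp [gradCLM_apply, Finset.sum_add_distrib, map_add, add_mul]
      rw [he]
      exact h.congr_of_eventuallyEq (by filter_upwards with y; simp)
  | mul_X p i hp =>
      have hX : HasFDerivAt (fun y : Euc d => y i) (EuclideanSpace.proj (𝕜 := ℝ) i) x :=
        (EuclideanSpace.proj (𝕜 := ℝ) i).hasFDerivAt
      have hmul := hp.mul hX
      have he : gradCLM (p * X i) x =
          MvPolynomial.eval (fun j => x j) p • (EuclideanSpace.proj (𝕜 := ℝ) i : Euc d →L[ℝ] ℝ)
            + x i • gradCLM p x := by
        ext v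
        simp only [ContinuousLinearMap.add_apply, ContinuousLinearMap.smul_apply,
          gradCLM_apply, PiLp.proj_apply, smul_eq_mul]
        classical
        simp only [pderiv_mul, pderiv_X, map_add, map_mul, eval_X, add_mul,
          Finset.sum_add_distrib]
        rw [add_comm]
        congr 1
        · rw [Finset.sum_eq_single i]
          · simp [PiLp.proj_apply]
          · intro j _ hji; simp [Pi.single_apply, hji]
          · simp
        · rw [Finset.mul_sum]
          apply Finset.sum_congr rfl; intro j _; ring
      rw [he]
      exact hmul.congr_of_eventuallyEq (by filter_upwards with y; simp)

open MvPolynomial in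
lemma continuous_mv_eval {d : ℕ} (p : MvPolynomial (Fin d) ℝ) :
    Continuous (fun y : Euc d => MvPolynomial.eval (fun i => y i) p) := by
  have h : Differentiable ℝ (fun y : Euc d => MvPolynomial.eval (fun i => y i) p) :=
    fun x => (hasFDerivAt_mv_eval p x).differentiableAt
  exact h.continuous

open MvPolynomial in
lemma totalDegree_pderiv_le' {d k : ℕ} (p : MvPolynomial (Fin d) ℝ) (i : Fin d)
    (h : p.totalDegree ≤ k) : (pderiv i p).totalDegree ≤ k - 1 := by
  classical
  conv_lhs => rw [p.as_sum]
  rw [map_sum]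
  refine le_trans (totalDegree_finset_sum _ _) (Finset.sup_le fun s hs => ?_)
  rw [pderiv_monomial]
  rcases Nat.eq_zero_or_pos (s i) with h0 | h1
  · simp [h0]
  · refine le_trans (totalDegree_monomial_le _ _) ?_
    show ((s - Finsupp.single i 1).sum fun _ e => e) ≤ k - 1
    have hsub : (s - Finsupp.single i 1) + Finsupp.single i 1 = s := by
      ext j
      rcases eq_or_ne j i with rfl | hji
      · simp [Nat.sub_add_cancel h1]
      · simp [Finsupp.single_apply, Ne.symm hji]
    have hsum : ((s - Finsupp.single i 1).sum fun _ e => e) + 1 = s.sum fun _ e => e := by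
      conv_rhs => rw [← hsub]
      rw [Finsupp.sum_add_index (by simp) (by intros; rfl)]
      simp
    have hle : (s.sum fun _ e => e) ≤ k := le_trans (le_totalDegree hs) h
    omega


/-- if the discrete weak gradient of `v = {v₀, v_b}` vanishes
(`∇_{w,k-1,T} v = 0`, expressed through the identity
`(∇_{w,k-1,T}v, q)_T = (∇v₀,q)_T + ⟨v_b - v₀, q·n⟩_{∂T}`), and `Q_b v₀ = v_b` on `∂T`,
then `∇v₀ = 0` on `T`, i.e. the degree-`k` polynomial `v₀` is constant on `T`. -/
theorem weak_gradient_zero_implies_gradient_zero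
    {d k : ℕ} (hk : 1 ≤ k)
    (T : Set (Euc d)) (hTopen : IsOpen T) (hTne : T.Nonempty)
    (hTbdd : Bornology.IsBounded T)
    (σ : Measure (Euc d)) (n : Euc d → Euc d)
    (v0 : Euc d → ℝ) (hv0 : v0 ∈ PolyScal d k)
    (vb Qbv0 : Euc d → ℝ)
    -- Q_b is the L² projection onto P_{k-1} on each face; q·n is such a polynomial:
    (hQborth : ∀ q ∈ PolyVec d (k-1),
      ∫ x in frontier T, (v0 x - Qbv0 x) * ⟪q x, n x⟫ ∂σ = 0)
    -- hypothesis: Q_b v₀ = v_b on ∂T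
    (hQbeq : ∀ x ∈ frontier T, Qbv0 x = vb x)
    -- hypothesis: the discrete weak gradient of v vanishes
    (hwg0 : ∀ q ∈ PolyVec d (k-1),
      (∫ x in T, fderiv ℝ v0 x (q x)) +
        (∫ x in frontier T, (vb x - v0 x) * ⟪q x, n x⟫ ∂σ) = 0) :
    ∀ x ∈ T, fderiv ℝ v0 x = 0 := by
  classical
  obtain ⟨p, hpk, hpe⟩ := hv0
  have hv0fun : v0 = fun y => MvPolynomial.eval (fun i => y i) p := funext hpe
  subst hv0fun
  set q : Euc d → Euc d :=
    fun x => WithLp.toLp 2 (fun i => MvPolynomial.eval (fun j => x j) (MvPolynomial.pderiv i p)) with hqdef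
  have hq : q ∈ PolyVec d (k - 1) := by
    intro i
    exact ⟨MvPolynomial.pderiv i p, totalDegree_pderiv_le' p i hpk, fun x => rfl⟩
  have hfd : ∀ x : Euc d,
      fderiv ℝ (fun y : Euc d => MvPolynomial.eval (fun i => y i) p) x = gradCLM p x :=
    fun x => (hasFDerivAt_mv_eval p x).fderiv
  set f : Euc d → ℝ :=
    fun x => ∑ i, (MvPolynomial.eval (fun j => x j) (MvPolynomial.pderiv i p)) ^ 2 with hfdef
  have hfq : ∀ x : Euc d,
      fderiv ℝ (fun y : Euc d => MvPolynomial.eval (fun i => y i) p) x (q x) = f x := by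
    intro x
    rw [hfd x, gradCLM_apply]
    exact Finset.sum_congr rfl fun i _ => (sq _).symm
  have hfnonneg : ∀ x, 0 ≤ f x := fun x => Finset.sum_nonneg fun i _ => sq_nonneg _
  have hfcont : Continuous f := by
    apply continuous_finset_sum
    intro i _
    exact (continuous_mv_eval (MvPolynomial.pderiv i p)).pow 2
  -- boundary term vanishes
  have hbnd : (∫ x in frontier T,
      ((vb x - MvPolynomial.eval (fun i => x i) p) * ⟪q x, n x⟫) ∂σ) = 0 := by
    have hEq : Set.EqOn
        (fun x => (vb x - MvPolynomial.eval (fun i => x i) p) * ⟪q x, n x⟫)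
        (fun x => -((MvPolynomial.eval (fun i => x i) p - Qbv0 x) * ⟪q x, n x⟫))
        (frontier T) := by
      intro x hx
      have := hQbeq x hx
      simp only [← this]
      ring
    rw [setIntegral_congr_fun (isClosed_frontier).measurableSet hEq, integral_neg,
      hQborth q hq, neg_zero]
  have hT0 : (∫ x in T, f x) = 0 := by
    have h1 := hwg0 q hq
    rw [hbnd, add_zero] at h1
    calc (∫ x in T, f x)
        = ∫ x in T, fderiv ℝ (fun y : Euc d => MvPolynomial.eval (fun i => y i) p) x (q x) :=
          integral_congr_ae (Filter.Eventually.of_forall fun x => (hfq x).symm)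
      _ = 0 := h1
  -- integrability
  have hK : IsCompact (closure T) :=
    Metric.isCompact_of_isClosed_isBounded isClosed_closure hTbdd.closure
  have hint : IntegrableOn f T := by
    exact (hfcont.continuousOn.integrableOn_compact hK).mono_set subset_closure
  -- f vanishes on T
  intro x hx
  have hfx : f x = 0 := by
    by_contra hne
    have hpos : 0 < ∫ y in T, f y := by
      refine (setIntegral_pos_iff_support_of_nonneg_ae
        (Filter.Eventually.of_forall fun y => hfnonneg y) hint).2 ?_
      have hUopen : IsOpen (T ∩ {y | f y ≠ 0}) :=
        hTopen.inter ((isClosed_eq hfcont continuous_const).isOpen_compl)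
      have hUsub : T ∩ {y | f y ≠ 0} ⊆ Function.support f ∩ T := by
        intro y hy; exact ⟨hy.2, hy.1⟩
      refine lt_of_lt_of_le ?_ (measure_mono hUsub)
      exact hUopen.measure_pos _ ⟨x, hx, hne⟩
    rw [hT0] at hpos
    exact lt_irrefl _ hpos
  have hcomp : ∀ i, MvPolynomial.eval (fun j => x j) (MvPolynomial.pderiv i p) = 0 := by
    intro i
    have := (Finset.sum_eq_zero_iff_of_nonneg (fun i _ => sq_nonneg
      (MvPolynomial.eval (fun j => x j) (MvPolynomial.pderiv i p)))).1 hfx i (Finset.mem_univ i)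
    exact (pow_eq_zero_iff two_ne_zero).1 this
  rw [hfd x]
  ext v
  rw [gradCLM_apply]
  simp [hcomp]
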